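/- For every n ≥ 1, the number of indices k ≥ 1 with S₂(k) = n equals ord₂(n), the 2-adic valuation of n; that is, the sequence S₂(1), S₂(2), S₂(3), … is obtained from the sequence 1, 2, 3, … by repeating each n ∈ ℕ exactly ord₂(n) many times. -/

import Mathlib

/-- The Smarandache primitive number `S₂(k)`: the least `n` such that `2^k` divides `n!`. -/
noncomputable def S2 (k : ℕ) : ℕ := sInf {n : ℕ | 2 ^ k ∣ Nat.factorial n}

private lemma dvd_iff_le (k n : ℕ) :
    2 ^ k ∣ Nat.factorial n ↔ k ≤ padicValNat 2 (Nat.factorial n) := by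
  haveI : Fact (Nat.Prime 2) := ⟨Nat.prime_two⟩
  rw [padicValNat_dvd_iff_le (Nat.factorial_ne_zero n)]

private lemma S2_eq_iff (k n : ℕ) (hn : 1 ≤ n) :
    S2 k = n ↔ 2 ^ k ∣ Nat.factorial n ∧ ¬ 2 ^ k ∣ Nat.factorial (n - 1) := by
  have hne : {m : ℕ | 2 ^ k ∣ Nat.factorial m}.Nonempty :=
    ⟨2 ^ k, Nat.dvd_factorial (by positivity) le_rfl⟩
  constructor
  · rintro rfl
    refine ⟨Nat.sInf_mem hne, fun h => ?_⟩
    have h1 : S2 k ≤ S2 k - 1 :=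
      Nat.sInf_le (show S2 k - 1 ∈ {m : ℕ | 2 ^ k ∣ Nat.factorial m} from h)
    omega
  · rintro ⟨h1, h2⟩
    have hle : S2 k ≤ n := Nat.sInf_le h1
    rcases lt_or_eq_of_le hle with h | h
    · exfalso
      have hm : S2 k ∈ {m : ℕ | 2 ^ k ∣ Nat.factorial m} := Nat.sInf_mem hne
      exact h2 (dvd_trans hm (Nat.factorial_dvd_factorial (Nat.le_sub_one_of_lt h)))
    · exact h

theorem stmt_11 : ∀ n : ℕ, 1 ≤ n →
    {k : ℕ | 1 ≤ k ∧ S2 k = n}.ncard = padicValNat 2 n := by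
  intro n hn
  haveI : Fact (Nat.Prime 2) := ⟨Nat.prime_two⟩
  set a := padicValNat 2 (Nat.factorial (n - 1)) with ha
  set b := padicValNat 2 (Nat.factorial n) with hb
  have hfac : Nat.factorial n = n * Nat.factorial (n - 1) := by
    rw [Nat.mul_factorial_pred (by omega)]
  have hab : b = padicValNat 2 n + a := by
    rw [hb, hfac, padicValNat.mul (by omega) (Nat.factorial_ne_zero _)]
  have hset : {k : ℕ | 1 ≤ k ∧ S2 k = n} = Set.Ioc a b := by
    ext k
    simp only [Set.mem_setOf_eq, Set.mem_Ioc]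
    rw [S2_eq_iff k n hn, dvd_iff_le, dvd_iff_le, ← ha, ← hb]
    omega
  rw [hset, ← Finset.coe_Ioc, Set.ncard_coe_finset, Nat.card_Ioc]
  omega
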